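/- For any vector λ in the probability simplex of ℝ^d, any doubly stochastic matrix M, and any real vector ε sorted increasingly, (Mλ)↑ · ε↑ ≤ λ↑ · ε↑, where x↑ denotes the increasing rearrangement of x. -/

import Mathlib

open scoped BigOperators

open Finset in
/-- Core combinatorial fact: if `c` takes values in `[0,1]` with total sum `S.card`, and
`lam` is pointwise at most on `Sᶜ` what it is on `S`, then `∑ c k * lam k ≤ ∑_{k∈S} lam k`. -/
lemma aux_frac_sum_le {d : ℕ} (lam : Fin d → ℝ) (c : Fin d → ℝ)
    (hc0 : ∀ k, 0 ≤ c k) (hc1 : ∀ k, c k ≤ 1) (S : Finset (Fin d))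
    (hcsum : ∑ k, c k = (S.card : ℝ))
    (hmin : ∀ j ∉ S, ∀ i ∈ S, lam j ≤ lam i) :
    ∑ k, c k * lam k ≤ ∑ k ∈ S, lam k := by
  rcases S.eq_empty_or_nonempty with rfl | hS
  · simp only [Finset.card_empty, Nat.cast_zero] at hcsum
    have hz : ∀ k ∈ Finset.univ (α := Fin d), c k = 0 :=
      (Finset.sum_eq_zero_iff_of_nonneg (fun k _ => hc0 k)).1 hcsum
    have : ∑ k, c k * lam k = 0 :=
      Finset.sum_eq_zero fun k hk => by rw [hz k hk, zero_mul]
    simp [this]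
  · obtain ⟨i0, hi0S, hi0min⟩ := S.exists_min_image lam hS
    set m0 := lam i0 with hm0
    have hsplit : ∑ k, c k * lam k = ∑ k ∈ S, c k * lam k + ∑ k ∈ Sᶜ, c k * lam k :=
      (Finset.sum_add_sum_compl S _).symm
    have hcompl : ∑ k ∈ Sᶜ, c k * lam k ≤ m0 * ((S.card : ℝ) - ∑ k ∈ S, c k) := by
      have h1 : ∑ k ∈ Sᶜ, c k * lam k ≤ ∑ k ∈ Sᶜ, c k * m0 := by
        refine Finset.sum_le_sum fun k hk => ?_
        have : lam k ≤ m0 := hmin k (Finset.mem_compl.1 hk) i0 hi0S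
        exact mul_le_mul_of_nonneg_left this (hc0 k)
      have h2 : ∑ k ∈ Sᶜ, c k = (S.card : ℝ) - ∑ k ∈ S, c k := by
        have := Finset.sum_add_sum_compl S c
        linarith [hcsum]
      calc ∑ k ∈ Sᶜ, c k * lam k ≤ ∑ k ∈ Sᶜ, c k * m0 := h1
        _ = (∑ k ∈ Sᶜ, c k) * m0 := by rw [Finset.sum_mul]
        _ = m0 * ((S.card : ℝ) - ∑ k ∈ S, c k) := by rw [h2, mul_comm]
    have hmain : ∑ k ∈ S, c k * lam k + m0 * ((S.card : ℝ) - ∑ k ∈ S, c k)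
        ≤ ∑ k ∈ S, lam k := by
      have hcard : (S.card : ℝ) = ∑ _k ∈ S, (1 : ℝ) := by simp
      rw [hcard, ← Finset.sum_sub_distrib, Finset.mul_sum, ← Finset.sum_add_distrib]
      refine Finset.sum_le_sum fun k hk => ?_
      have h1 : m0 ≤ lam k := hi0min k hk
      have h2 : c k ≤ 1 := hc1 k
      nlinarith
    linarith
  
open Finset in
/-- Abel summation comparison: if two vectors have equal total sum, all upper tail sums of
`a` are at most those of `b`, and `eps` is monotone, then `∑ a i * eps i ≤ ∑ b i * eps i`. -/
lemma aux_abel {d : ℕ} (a b : Fin d → ℝ) (eps : Fin d → ℝ) (hmono : Monotone eps)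
    (hsum : ∑ i, a i = ∑ i, b i)
    (htail : ∀ m : ℕ, ∑ i ∈ Finset.univ.filter (fun i : Fin d => m ≤ i.val), a i
      ≤ ∑ i ∈ Finset.univ.filter (fun i : Fin d => m ≤ i.val), b i) :
    ∑ i, a i * eps i ≤ ∑ i, b i * eps i := by
  rcases Nat.eq_zero_or_pos d with rfl | hd
  · simp
  set e0 := eps ⟨0, hd⟩ with he0
  set δ : ℕ → ℝ := fun k => if h : k + 1 < d then
      eps ⟨k + 1, h⟩ - eps ⟨k, Nat.lt_of_succ_lt h⟩ else 0 with hδ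
  have hδnn : ∀ k, 0 ≤ δ k := by
    intro k
    by_cases h : k + 1 < d
    · have he : δ k = eps ⟨k + 1, h⟩ - eps ⟨k, Nat.lt_of_succ_lt h⟩ := dif_pos h
      have hle : eps ⟨k, Nat.lt_of_succ_lt h⟩ ≤ eps ⟨k + 1, h⟩ :=
        hmono (by simp [Fin.le_def])
      rw [he]; linarith
    · have he : δ k = 0 := dif_neg h
      rw [he]
  have heps : ∀ i : Fin d, eps i = e0 + ∑ k ∈ Finset.range i.val, δ k := by
    intro i
    obtain ⟨n, hn⟩ := i
    induction n with
    | zero => simp [he0]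
    | succ n ih =>
      have hn' : n < d := Nat.lt_of_succ_lt hn
      rw [Finset.sum_range_succ, ← add_assoc, ← ih hn']
      have : δ n = eps ⟨n+1, hn⟩ - eps ⟨n, hn'⟩ := by rw [hδ]; exact dif_pos hn
      rw [this]; ring
  -- rewrite both sides
  have key : ∀ x : Fin d → ℝ, ∑ i, x i * eps i
      = e0 * (∑ i, x i) + ∑ k ∈ Finset.range d, δ k *
        ∑ i ∈ Finset.univ.filter (fun i : Fin d => k + 1 ≤ i.val), x i := by
    intro x
    have step1 : ∑ i, x i * eps i
        = ∑ i, (x i * e0 + ∑ k ∈ Finset.range i.val, x i * δ k) := by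
      refine Finset.sum_congr rfl fun i _ => ?_
      rw [heps i, mul_add, Finset.mul_sum]
    rw [step1, Finset.sum_add_distrib]
    congr 1
    · rw [← Finset.sum_mul, mul_comm]
    · have hrange : ∀ i : Fin d, Finset.range i.val
          = (Finset.range d).filter (fun k => k < i.val) := by
        intro i
        ext k
        simp only [Finset.mem_range, Finset.mem_filter]
        omega
      calc ∑ i, ∑ k ∈ Finset.range i.val, x i * δ k
          = ∑ i, ∑ k ∈ (Finset.range d).filter (fun k => k < i.val), x i * δ k := by
            exact Finset.sum_congr rfl fun i _ => by rw [hrange i]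
        _ = ∑ i, ∑ k ∈ Finset.range d, if k < i.val then x i * δ k else 0 := by
            exact Finset.sum_congr rfl fun i _ => (Finset.sum_filter _ _)
        _ = ∑ k ∈ Finset.range d, ∑ i, if k < i.val then x i * δ k else 0 :=
            Finset.sum_comm
        _ = ∑ k ∈ Finset.range d, δ k *
              ∑ i ∈ Finset.univ.filter (fun i : Fin d => k + 1 ≤ i.val), x i := by
            refine Finset.sum_congr rfl fun k _ => ?_
            rw [← Finset.sum_filter, Finset.mul_sum]
            refine Finset.sum_congr (by ext i; simp only [Finset.mem_filter, Finset.mem_univ, true_and]; omega) fun i _ => ?_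
            ring
  rw [key a, key b, hsum]
  refine (add_le_add_iff_left _).2 (Finset.sum_le_sum fun k _ => ?_)
  exact mul_le_mul_of_nonneg_left (htail (k + 1)) (hδnn k)

/-- Applying a doubly stochastic matrix can only decrease the scalar product of the
increasing rearrangement with an increasingly sorted vector. -/
theorem doublyStochastic_increasing_dot {d : ℕ} (lam : Fin d → ℝ)
    (hnn : ∀ i, 0 ≤ lam i) (hsum : ∑ i, lam i = 1)
    (M : Matrix (Fin d) (Fin d) ℝ) (hMnn : ∀ i j, 0 ≤ M i j)
    (hrow : ∀ i, ∑ j, M i j = 1) (hcol : ∀ j, ∑ i, M i j = 1)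
    (eps : Fin d → ℝ) (hmono : Monotone eps)
    (σ τ : Equiv.Perm (Fin d))
    (hσ : Monotone (M.mulVec lam ∘ σ)) (hτ : Monotone (lam ∘ τ)) :
    ∑ i, (M.mulVec lam ∘ σ) i * eps i ≤ ∑ i, (lam ∘ τ) i * eps i := by
  set a := M.mulVec lam ∘ σ with ha
  set b := lam ∘ τ with hb
  apply aux_abel a b eps hmono
  · -- equal sums
    have h1 : ∑ i, a i = ∑ j, M.mulVec lam j := by
      rw [ha]; exact Equiv.sum_comp σ _
    have h2 : ∑ j, M.mulVec lam j = ∑ i, lam i := by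
      simp only [Matrix.mulVec, dotProduct]
      rw [Finset.sum_comm]
      refine Finset.sum_congr rfl fun k _ => ?_
      rw [← Finset.sum_mul, hcol k, one_mul]
    have h3 : ∑ i, b i = ∑ i, lam i := by
      rw [hb]; exact Equiv.sum_comp τ _
    rw [h1, h2, h3]
  · intro m
    set F := Finset.univ.filter (fun i : Fin d => m ≤ i.val) with hF
    set S := F.image σ with hS
    set Sb := F.image τ with hSb
    have hcardS : S.card = F.card := Finset.card_image_of_injective F σ.injective
    have hcardSb : Sb.card = F.card := Finset.card_image_of_injective F τ.injective
    have hleft : ∑ i ∈ F, a i = ∑ k, (∑ j ∈ S, M j k) * lam k := by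
      rw [ha]
      calc ∑ i ∈ F, (M.mulVec lam ∘ σ) i = ∑ j ∈ S, M.mulVec lam j :=
            (Finset.sum_image (fun x _ y _ h => σ.injective h)).symm
        _ = ∑ j ∈ S, ∑ k, M j k * lam k := rfl
        _ = ∑ k, ∑ j ∈ S, M j k * lam k := Finset.sum_comm
        _ = ∑ k, (∑ j ∈ S, M j k) * lam k := by
            refine Finset.sum_congr rfl fun k _ => ?_
            rw [Finset.sum_mul]
    have hright : ∑ i ∈ F, b i = ∑ k ∈ Sb, lam k := by
      rw [hb]
      exact (Finset.sum_image (fun x _ y _ h => τ.injective h)).symm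
    rw [hleft, hright]
    set c : Fin d → ℝ := fun k => ∑ j ∈ S, M j k with hc
    refine aux_frac_sum_le lam c ?_ ?_ Sb ?_ ?_
    · intro k
      exact Finset.sum_nonneg fun j _ => hMnn j k
    · intro k
      calc ∑ j ∈ S, M j k ≤ ∑ j, M j k :=
            Finset.sum_le_sum_of_subset_of_nonneg (Finset.subset_univ S)
              (fun j _ _ => hMnn j k)
        _ = 1 := hcol k
    · calc ∑ k, c k = ∑ j ∈ S, ∑ k, M j k := Finset.sum_comm
        _ = ∑ j ∈ S, (1 : ℝ) := Finset.sum_congr rfl fun j _ => hrow j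
        _ = (S.card : ℝ) := by simp
        _ = (Sb.card : ℝ) := by rw [hcardS, hcardSb]
    · intro j hj i hi
      obtain ⟨i', hi'F, rfl⟩ := Finset.mem_image.1 hi
      have hj' : τ.symm j ∉ F := by
        intro h
        exact hj (Finset.mem_image.2 ⟨τ.symm j, h, τ.apply_symm_apply j⟩)
      have hji : τ.symm j ≤ i' := by
        simp only [hF, Finset.mem_filter, Finset.mem_univ, true_and] at hi'F hj'
        exact Fin.le_def.2 (le_trans (le_of_lt (Nat.lt_of_not_le hj')) hi'F)
      have := hτ hji
      simp only [hb, Function.comp_apply, Equiv.apply_symm_apply] at this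
      exact this
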